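/- Let Ω ⊂ ℝ^d be an open convex set, π a supporting hyperplane of Ω, and σ : [a,b] → Ω a C¹ path. Then ∫_a^b ⟨ν_π(σ(t)), σ'(t)⟩ / d(σ(t),π) dt = log( d(σ(a),π) / d(σ(b),π) ). Consequently, for any C¹ path σ from x to y, the Funk length ∫_a^b p_{Ω,σ(t)}(σ'(t)) dt is at least F(x,y) = sup_π log(d(x,π)/d(y,π)). -/

import Mathlib

/-- The affine hyperplane {p : ⟪ν, p⟫ = c}. -/
def hyperplane {d : ℕ} (ν : EuclideanSpace ℝ (Fin d)) (c : ℝ) :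
    Set (EuclideanSpace ℝ (Fin d)) :=
  {p | (inner ℝ ν p : ℝ) = c}

/-- The hyperplane {⟪ν,·⟫ = c} (with unit normal ν) supports Ω: Ω lies in the closed
half-space {⟪ν,·⟫ ≤ c} and the hyperplane touches the closure of Ω. -/
def IsSupporting {d : ℕ} (Ω : Set (EuclideanSpace ℝ (Fin d)))
    (ν : EuclideanSpace ℝ (Fin d)) (c : ℝ) : Prop :=
  ‖ν‖ = 1 ∧ (∀ p ∈ Ω, (inner ℝ ν p : ℝ) ≤ c) ∧ ∃ b ∈ closure Ω, (inner ℝ ν b : ℝ) = c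

lemma hyperplane_nonempty {d : ℕ} (ν : EuclideanSpace ℝ (Fin d)) (hν : ‖ν‖ = 1) (c : ℝ) :
    (hyperplane ν c).Nonempty := by
  refine ⟨c • ν, ?_⟩
  show (inner ℝ ν (c • ν) : ℝ) = c
  rw [real_inner_smul_right, real_inner_self_eq_norm_sq, hν]; ring

lemma infDist_hyperplane {d : ℕ} (ν : EuclideanSpace ℝ (Fin d)) (hν : ‖ν‖ = 1)
    (c : ℝ) (q : EuclideanSpace ℝ (Fin d)) :
    Metric.infDist q (hyperplane ν c) = |(inner ℝ ν q : ℝ) - c| := by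
  have key : ∀ p ∈ hyperplane ν c, |(inner ℝ ν q : ℝ) - c| ≤ dist q p := by
    intro p hp
    have h1 : (inner ℝ ν q : ℝ) - c = inner ℝ ν (q - p) := by
      rw [inner_sub_right, hp]
    rw [h1, dist_eq_norm]
    calc |(inner ℝ ν (q - p) : ℝ)| ≤ ‖ν‖ * ‖q - p‖ := abs_real_inner_le_norm ν (q - p)
      _ = ‖q - p‖ := by rw [hν, one_mul]
  apply le_antisymm
  · have hmem : q + (c - (inner ℝ ν q : ℝ)) • ν ∈ hyperplane ν c := by
      show (inner ℝ ν (q + (c - (inner ℝ ν q : ℝ)) • ν) : ℝ) = c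
      rw [inner_add_right, real_inner_smul_right, real_inner_self_eq_norm_sq, hν]; ring
    calc Metric.infDist q (hyperplane ν c) ≤ dist q (q + (c - (inner ℝ ν q : ℝ)) • ν) :=
          Metric.infDist_le_dist_of_mem hmem
      _ = |(inner ℝ ν q : ℝ) - c| := by
          rw [dist_eq_norm]
          simp only [add_sub_cancel_left, norm_neg, norm_smul, Real.norm_eq_abs, hν, mul_one,
            abs_sub_comm]
          rw [show q - (q + (c - (inner ℝ ν q : ℝ)) • ν) = -((c - (inner ℝ ν q : ℝ)) • ν) by abel]
          rw [norm_neg, norm_smul, hν, mul_one, Real.norm_eq_abs, abs_sub_comm]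
  · by_contra h
    push_neg at h
    obtain ⟨p, hp, hlt⟩ := (Metric.infDist_lt_iff (hyperplane_nonempty ν hν c)).1 h
    exact absurd hlt (not_lt.2 (key p hp))


lemma inner_lt_of_mem {d : ℕ} {Ω : Set (EuclideanSpace ℝ (Fin d))} (hΩo : IsOpen Ω)
    {ν : EuclideanSpace ℝ (Fin d)} {c : ℝ} (hsupp : IsSupporting Ω ν c)
    {q : EuclideanSpace ℝ (Fin d)} (hq : q ∈ Ω) : (inner ℝ ν q : ℝ) < c := by
  obtain ⟨hν, hle, -⟩ := hsupp
  obtain ⟨ε, hε, hball⟩ := Metric.isOpen_iff.1 hΩo q hq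
  have hmem : q + (ε / 2) • ν ∈ Ω := by
    apply hball
    rw [Metric.mem_ball, dist_eq_norm]
    rw [show q + (ε / 2) • ν - q = (ε / 2) • ν by abel]
    rw [norm_smul, hν, mul_one, Real.norm_eq_abs, abs_of_pos (by linarith)]
    linarith
  have := hle _ hmem
  rw [inner_add_right, real_inner_smul_right, real_inner_self_eq_norm_sq, hν] at this
  nlinarith

lemma infDist_hyperplane_of_mem {d : ℕ} {Ω : Set (EuclideanSpace ℝ (Fin d))} (hΩo : IsOpen Ω)
    {ν : EuclideanSpace ℝ (Fin d)} {c : ℝ} (hsupp : IsSupporting Ω ν c)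
    {q : EuclideanSpace ℝ (Fin d)} (hq : q ∈ Ω) :
    Metric.infDist q (hyperplane ν c) = c - (inner ℝ ν q : ℝ) := by
  rw [infDist_hyperplane ν hsupp.1 c q,
    abs_of_neg (by linarith [inner_lt_of_mem hΩo hsupp hq])]
  ring

lemma key_integral {d : ℕ} {Ω : Set (EuclideanSpace ℝ (Fin d))} (hΩo : IsOpen Ω)
    {ν : EuclideanSpace ℝ (Fin d)} {c : ℝ} (hsupp : IsSupporting Ω ν c)
    {a b : ℝ} (hab : a ≤ b) {σ σ' : ℝ → EuclideanSpace ℝ (Fin d)}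
    (hσ : ∀ t ∈ Set.Icc a b, HasDerivAt σ (σ' t) t)
    (hσ' : ContinuousOn σ' (Set.Icc a b))
    (hσΩ : ∀ t ∈ Set.Icc a b, σ t ∈ Ω) :
    (∫ t in a..b, (inner ℝ ν (σ' t) : ℝ) / Metric.infDist (σ t) (hyperplane ν c)) =
      Real.log (Metric.infDist (σ a) (hyperplane ν c) /
        Metric.infDist (σ b) (hyperplane ν c)) := by
  have huIcc : Set.uIcc a b = Set.Icc a b := Set.uIcc_of_le hab
  set f : ℝ → ℝ := fun t => c - (inner ℝ ν (σ t) : ℝ) with hf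
  have hfpos : ∀ t ∈ Set.Icc a b, 0 < f t := fun t ht => by
    have := inner_lt_of_mem hΩo hsupp (hσΩ t ht)
    show 0 < c - (inner ℝ ν (σ t) : ℝ); linarith
  have hdist : ∀ t ∈ Set.Icc a b, Metric.infDist (σ t) (hyperplane ν c) = f t :=
    fun t ht => infDist_hyperplane_of_mem hΩo hsupp (hσΩ t ht)
  -- derivative of f
  have hfderiv : ∀ t ∈ Set.Icc a b, HasDerivAt f (-(inner ℝ ν (σ' t) : ℝ)) t := by
    intro t ht
    have h1 : HasDerivAt (fun s => (inner ℝ ν (σ s) : ℝ)) ((inner ℝ ν (σ' t) : ℝ)) t :=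
      (innerSL ℝ ν).hasFDerivAt.comp_hasDerivAt t (hσ t ht)
    simpa using h1.const_sub c
  -- F = -log f
  have hFderiv : ∀ t ∈ Set.uIcc a b, HasDerivAt (fun s => -Real.log (f s))
      ((inner ℝ ν (σ' t) : ℝ) / f t) t := by
    intro t ht
    rw [huIcc] at ht
    have h2 := (Real.hasDerivAt_log (ne_of_gt (hfpos t ht))).comp t (hfderiv t ht)
    have h3 := h2.neg
    exact h3.congr_deriv (by ring)
  have hfcont : ContinuousOn f (Set.Icc a b) := by
    have : ContinuousOn σ (Set.Icc a b) := fun t ht => (hσ t ht).continuousAt.continuousWithinAt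
    exact (continuous_const.continuousOn).sub ((innerSL ℝ ν).continuous.comp_continuousOn this)
  have hicont : ContinuousOn (fun t => (inner ℝ ν (σ' t) : ℝ) / f t) (Set.Icc a b) :=
    ((innerSL ℝ ν).continuous.comp_continuousOn hσ').div hfcont
      (fun t ht => ne_of_gt (hfpos t ht))
  have hii : IntervalIntegrable (fun t => (inner ℝ ν (σ' t) : ℝ) / f t)
      MeasureTheory.volume a b := (hicont.mono (by rw [huIcc])).intervalIntegrable
  have hint := intervalIntegral.integral_eq_sub_of_hasDerivAt hFderiv hii
  have hcongr : (∫ t in a..b, (inner ℝ ν (σ' t) : ℝ) / Metric.infDist (σ t) (hyperplane ν c))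
      = ∫ t in a..b, (inner ℝ ν (σ' t) : ℝ) / f t := by
    apply intervalIntegral.integral_congr
    intro t ht
    rw [huIcc] at ht
    show (inner ℝ ν (σ' t) : ℝ) / Metric.infDist (σ t) (hyperplane ν c) = (inner ℝ ν (σ' t) : ℝ) / f t
    rw [hdist t ht]
  rw [hcongr, hint, hdist a (Set.left_mem_Icc.2 hab), hdist b (Set.right_mem_Icc.2 hab),
    Real.log_div (ne_of_gt (hfpos a (Set.left_mem_Icc.2 hab)))
      (ne_of_gt (hfpos b (Set.right_mem_Icc.2 hab)))]
  ring

/-- For a C¹ path σ in Ω and a supporting hyperplane π of Ω,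
∫ₐᵇ ⟪ν_π,σ'(t)⟫/d(σ(t),π) dt = log(d(σ(a),π)/d(σ(b),π)); consequently the Funk length
∫ₐᵇ p_{Ω,σ(t)}(σ'(t)) dt of σ is at least F(σ(a),σ(b)) = sup_π log(d(σ(a),π)/d(σ(b),π)). -/
theorem stmt15 {d : ℕ} (Ω : Set (EuclideanSpace ℝ (Fin d)))
    (hΩo : IsOpen Ω) (hΩc : Convex ℝ Ω)
    (ν : EuclideanSpace ℝ (Fin d)) (c : ℝ) (hsupp : IsSupporting Ω ν c)
    (a b : ℝ) (hab : a ≤ b)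
    (σ σ' : ℝ → EuclideanSpace ℝ (Fin d))
    (hσ : ∀ t ∈ Set.Icc a b, HasDerivAt σ (σ' t) t)
    (hσ' : ContinuousOn σ' (Set.Icc a b))
    (hσΩ : ∀ t ∈ Set.Icc a b, σ t ∈ Ω)
    (p : EuclideanSpace ℝ (Fin d) → EuclideanSpace ℝ (Fin d) → ℝ)
    (hp : ∀ q ξ, p q ξ = sSup {r : ℝ | ∃ ν' c', IsSupporting Ω ν' c' ∧
      r = (inner ℝ ν' ξ : ℝ) / Metric.infDist q (hyperplane ν' c')})
    (hint : IntervalIntegrable (fun t => p (σ t) (σ' t)) MeasureTheory.volume a b) :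
    (∫ t in a..b, (inner ℝ ν (σ' t) : ℝ) / Metric.infDist (σ t) (hyperplane ν c)) =
      Real.log (Metric.infDist (σ a) (hyperplane ν c) /
        Metric.infDist (σ b) (hyperplane ν c)) ∧
    sSup {r : ℝ | ∃ ν' c', IsSupporting Ω ν' c' ∧
        r = Real.log (Metric.infDist (σ a) (hyperplane ν' c') /
              Metric.infDist (σ b) (hyperplane ν' c'))} ≤
      ∫ t in a..b, p (σ t) (σ' t) := by

  constructor
  · exact key_integral hΩo hsupp hab hσ hσ' hσΩ
  -- second part
  · -- Ωᶜ is nonempty and closed; points of Ω are at positive distance from it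
    have hcompl_ne : Ωᶜ.Nonempty := by
      obtain ⟨q0, hq0⟩ := hyperplane_nonempty ν hsupp.1 c
      refine ⟨q0, fun hq0Ω => ?_⟩
      exact absurd hq0 (ne_of_lt (inner_lt_of_mem hΩo hsupp hq0Ω))
    have hdpos : ∀ q ∈ Ω, 0 < Metric.infDist q Ωᶜ := by
      intro q hq
      exact (hΩo.isClosed_compl.notMem_iff_infDist_pos hcompl_ne).1 (by simpa using hq)
    -- uniform bound for the sets defining p, and membership bound
    have hbdd : ∀ q ∈ Ω, ∀ ξ, BddAbove {r : ℝ | ∃ ν' c', IsSupporting Ω ν' c' ∧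
        r = (inner ℝ ν' ξ : ℝ) / Metric.infDist q (hyperplane ν' c')} := by
      intro q hq ξ
      refine ⟨‖ξ‖ / Metric.infDist q Ωᶜ, ?_⟩
      rintro r ⟨ν', c', hsupp', rfl⟩
      have hsub : hyperplane ν' c' ⊆ Ωᶜ := by
        intro x hx hxΩ
        exact absurd hx (ne_of_lt (inner_lt_of_mem hΩo hsupp' hxΩ))
      have hne' : (hyperplane ν' c').Nonempty := hyperplane_nonempty ν' hsupp'.1 c'
      have hle : Metric.infDist q Ωᶜ ≤ Metric.infDist q (hyperplane ν' c') :=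
        Metric.infDist_le_infDist_of_subset hsub hne'
      have hd'pos : 0 < Metric.infDist q (hyperplane ν' c') := lt_of_lt_of_le (hdpos q hq) hle
      have h1 : (inner ℝ ν' ξ : ℝ) ≤ ‖ξ‖ := by
        calc (inner ℝ ν' ξ : ℝ) ≤ ‖ν'‖ * ‖ξ‖ := real_inner_le_norm ν' ξ
          _ = ‖ξ‖ := by rw [hsupp'.1, one_mul]
      calc (inner ℝ ν' ξ : ℝ) / Metric.infDist q (hyperplane ν' c')
          ≤ ‖ξ‖ / Metric.infDist q (hyperplane ν' c') :=
            div_le_div_of_nonneg_right h1 hd'pos.le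
        _ ≤ ‖ξ‖ / Metric.infDist q Ωᶜ :=
            div_le_div_of_nonneg_left (norm_nonneg ξ) (hdpos q hq) hle
    -- the Funk-type sup set is nonempty
    refine csSup_le ⟨_, ν, c, hsupp, rfl⟩ ?_
    rintro r ⟨ν', c', hsupp', rfl⟩
    rw [← key_integral hΩo hsupp' hab hσ hσ' hσΩ]
    -- pointwise: integrand ≤ p
    apply intervalIntegral.integral_mono_on hab _ hint
    · intro t ht
      rw [hp]
      exact le_csSup (hbdd (σ t) (hσΩ t ht) (σ' t)) ⟨ν', c', hsupp', rfl⟩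
    · -- integrability of the left integrand
      have huIcc : Set.uIcc a b = Set.Icc a b := Set.uIcc_of_le hab
      have hσcont : ContinuousOn σ (Set.Icc a b) :=
        fun t ht => (hσ t ht).continuousAt.continuousWithinAt
      have hfcont : ContinuousOn (fun t => Metric.infDist (σ t) (hyperplane ν' c'))
          (Set.Icc a b) :=
        (Metric.continuous_infDist_pt (hyperplane ν' c')).comp_continuousOn hσcont
      have hfne : ∀ t ∈ Set.Icc a b, Metric.infDist (σ t) (hyperplane ν' c') ≠ 0 := by
        intro t ht
        rw [infDist_hyperplane_of_mem hΩo hsupp' (hσΩ t ht)]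
        have := inner_lt_of_mem hΩo hsupp' (hσΩ t ht)
        linarith
      have : ContinuousOn (fun t => (inner ℝ ν' (σ' t) : ℝ) /
          Metric.infDist (σ t) (hyperplane ν' c')) (Set.Icc a b) :=
        ((innerSL ℝ ν').continuous.comp_continuousOn hσ').div hfcont hfne
      exact (this.mono (by rw [huIcc])).intervalIntegrable
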